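/- Define ∂ₓK(z,t) = -z/(4√π t^{3/2}) e^{-z²/(4t)}. For every t > 0, every integer n with n ∉ {-1, 0}, and every z in the closure of D (the closed square with vertices 0, 1+i, 2, 1-i), one has ∫₀ᵗ |∂ₓK(z + 2n, t - τ)|² dτ ≤ (4/π)(1 + 1/t) e^{-n²/(2t)}. -/

import Mathlib

open Complex MeasureTheory

/-- The open square `D` with vertices `0, 1+i, 2, 1-i`, viewed in `ℂ`. -/
def Dsq : Set ℂ := {z : ℂ | |z.im| < z.re ∧ |z.im| < 2 - z.re}

/-- `∂ₓK(z,t) = -z/(4√π t^{3/2}) e^{-z²/(4t)}`. -/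
noncomputable def dxK (z : ℂ) (t : ℝ) : ℂ :=
  -z / (4 * Real.sqrt Real.pi * (t ^ ((3:ℝ)/2) : ℝ)) * Complex.exp (-z ^ 2 / (4 * (t : ℂ)))

open Set Filter in
lemma aux_hasDerivAt_G (c : ℝ) (hc : c ≠ 0) {s : ℝ} (hs : s ≠ 0) :
    HasDerivAt (fun s => Real.exp (-c / s) * (1/(c*s) + 1/c^2)) (Real.exp (-c/s) / s^3) s := by
  have h1 : HasDerivAt (fun s : ℝ => -c / s) (c / s^2) s := by
    have h := (hasDerivAt_inv hs).const_mul (-c)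
    simp only [neg_mul_neg, div_eq_mul_inv] at h ⊢
    exact h
  have h2 : HasDerivAt (fun s : ℝ => Real.exp (-c / s)) (Real.exp (-c/s) * (c / s^2)) s :=
    (Real.hasDerivAt_exp _).comp s h1
  have h3 : HasDerivAt (fun s : ℝ => 1/(c*s) + 1/c^2) (-(1/(c*s^2))) s := by
    have h := ((hasDerivAt_inv hs).const_mul c⁻¹).add_const (1/c^2)
    have he : (fun s : ℝ => 1/(c*s) + 1/c^2) = fun s : ℝ => c⁻¹ * s⁻¹ + 1/c^2 := by
      funext u; rw [one_div, mul_inv]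
    rw [he]
    refine h.congr_deriv ?_
    field_simp
  have h4 := h2.mul h3
  refine h4.congr_deriv ?_
  field_simp
  ring

open Set Filter in
lemma aux_tendsto_G_zero (c : ℝ) (hc : 0 < c) :
    Tendsto (fun s => Real.exp (-c / s) * (1/(c*s) + 1/c^2)) (nhdsWithin 0 (Set.Ioi 0)) (nhds 0) := by
  have hinv : Tendsto (fun s : ℝ => s⁻¹) (nhdsWithin 0 (Set.Ioi 0)) atTop :=
    tendsto_id.inv_tendsto_nhdsGT_zero
  have h1 : Tendsto (fun u : ℝ => u * Real.exp (-(c*u))) atTop (nhds 0) := by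
    have := (Real.tendsto_pow_mul_exp_neg_atTop_nhds_zero 1).comp
      (tendsto_id.const_mul_atTop hc)
    have h2 := this.const_mul c⁻¹
    simp only [mul_zero] at h2
    convert h2 using 2 with u
    simp only [Function.comp, pow_one, id_eq]
    field_simp
  have h2 : Tendsto (fun s : ℝ => Real.exp (-c/s) * (1/(c*s))) (nhdsWithin 0 (Set.Ioi 0)) (nhds 0) := by
    have := (h1.comp hinv).const_mul c⁻¹
    simp only [mul_zero] at this
    convert this using 2 with s
    simp only [Function.comp, id_eq]
    rw [div_eq_mul_inv, one_div, mul_inv, neg_mul]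
    ring
  have h3 : Tendsto (fun s : ℝ => Real.exp (-c/s) * (1/c^2)) (nhdsWithin 0 (Set.Ioi 0)) (nhds 0) := by
    have hexp : Tendsto (fun s : ℝ => Real.exp (-c/s)) (nhdsWithin 0 (Set.Ioi 0)) (nhds 0) := by
      have : Tendsto (fun s : ℝ => -c/s) (nhdsWithin 0 (Set.Ioi 0)) atBot := by
        have := hinv.const_mul_atTop hc
        have h4 := tendsto_neg_atBot_iff.2 this
        convert h4 using 2 with s
        rw [div_eq_mul_inv]; ring
      exact Real.tendsto_exp_atBot.comp this
    have h5 := hexp.mul_const (1/c^2)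
    rw [zero_mul] at h5
    exact h5
  have := h2.add h3
  simp only [add_zero] at this
  convert this using 2 with s
  ring

lemma aux_cube_le_exp {x : ℝ} (hx : 0 ≤ x) : x^3/27 ≤ Real.exp x := by
  have h := Real.add_one_le_exp (x/3)
  have hp : Real.exp x = (Real.exp (x/3))^3 := by
    rw [← Real.exp_nat_mul]; congr 1; push_cast; ring
  have h1 : (x/3)^3 ≤ (Real.exp (x/3))^3 :=
    pow_le_pow_left₀ (by positivity) (le_trans (by linarith) h) 3
  calc x^3/27 = (x/3)^3 := by ring
  _ ≤ (Real.exp (x/3))^3 := h1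
  _ = Real.exp x := hp.symm

lemma aux_g_bound {c s : ℝ} (hc : 0 < c) (hs : 0 < s) :
    Real.exp (-c/s) / s^3 ≤ 27/c^3 := by
  have h3 : (27*s^3/c^3)⁻¹ ≤ Real.exp (c/s) := by
    calc (27*s^3/c^3)⁻¹ = (c/s)^3/27 := by rw [div_pow]; field_simp
    _ ≤ Real.exp (c/s) := aux_cube_le_exp (le_of_lt (div_pos hc hs))
  have h4 : Real.exp (-c/s) ≤ 27*s^3/c^3 := by
    rw [neg_div, Real.exp_neg]
    have := inv_anti₀ (by positivity) h3
    rwa [inv_inv] at this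
  calc Real.exp (-c/s) / s^3 ≤ (27*s^3/c^3)/s^3 := by gcongr
  _ = 27/c^3 := by field_simp

set_option maxHeartbeats 1000000 in
lemma aux_g_int (c t : ℝ) (hc : 0 < c) (ht : 0 < t) :
    IntervalIntegrable (fun s : ℝ => Real.exp (-c/s) / s^3) volume 0 t := by
  rw [intervalIntegrable_iff_integrableOn_Ioc_of_le ht.le]
  have hcont : ContinuousOn (fun s : ℝ => Real.exp (-c/s) / s^3) (Set.Ioc 0 t) := by
    apply ContinuousOn.div
    · exact Real.continuous_exp.comp_continuousOn
        (continuousOn_const.div continuousOn_id (fun s hs => ne_of_gt hs.1))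
    · exact (continuous_pow 3).continuousOn
    · intro s hs; exact pow_ne_zero 3 (ne_of_gt hs.1)
  refine ⟨hcont.aestronglyMeasurable measurableSet_Ioc,
    HasFiniteIntegral.restrict_of_bounded (27/c^3) measure_Ioc_lt_top ?_⟩
  filter_upwards [ae_restrict_mem measurableSet_Ioc] with s hs
  rw [Real.norm_of_nonneg (div_nonneg (Real.exp_nonneg _) (pow_nonneg hs.1.le 3))]
  exact aux_g_bound hc hs.1

open Set Filter in
lemma aux_integral_g (c t : ℝ) (hc : 0 < c) (ht : 0 < t) :
    ∫ τ in Set.Ioo (0:ℝ) t, Real.exp (-c/(t-τ)) / (t-τ)^3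
      = Real.exp (-c/t) * (1/(c*t) + 1/c^2) := by
  have hFTC : ∫ s in (0:ℝ)..t, Real.exp (-c/s)/s^3
      = Real.exp (-c/t) * (1/(c*t) + 1/c^2) - 0 := by
    apply intervalIntegral.integral_eq_sub_of_hasDerivAt_of_tendsto ht
      (fun s hs => aux_hasDerivAt_G c hc.ne' (ne_of_gt hs.1)) (aux_g_int c t hc ht)
      (aux_tendsto_G_zero c hc)
    exact ((aux_hasDerivAt_G c hc.ne' ht.ne').continuousAt.tendsto).mono_left nhdsWithin_le_nhds
  have hcomp : ∫ s in (0:ℝ)..t, Real.exp (-c/(t-s))/(t-s)^3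
      = ∫ s in (0:ℝ)..t, Real.exp (-c/s)/s^3 := by
    have h := intervalIntegral.integral_comp_sub_left
      (a := (0:ℝ)) (b := t) (fun s => Real.exp (-c/s)/s^3) t
    simpa using h
  rw [← MeasureTheory.integral_Ioc_eq_integral_Ioo, ← intervalIntegral.integral_of_le ht.le]
  rw [hcomp, hFTC]; ring

set_option maxHeartbeats 2000000 in
/-- For `t > 0`, `n ∉ {-1, 0}` and `z` in the closure of `D`,
`∫₀ᵗ |∂ₓK(z+2n, t-τ)|² dτ ≤ (4/π)(1 + 1/t) e^{-n²/(2t)}`. -/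
theorem integral_sq_bound (t : ℝ) (ht : 0 < t) (n : ℤ) (hn : n ≠ -1) (hn' : n ≠ 0)
    (z : ℂ) (hz : z ∈ closure Dsq) :
    ∫ τ in Set.Ioo (0:ℝ) t, ‖dxK (z + 2 * (n : ℂ)) (t - τ)‖ ^ 2 ≤
      (4 / Real.pi) * (1 + 1 / t) * Real.exp (-(n : ℝ) ^ 2 / (2 * t)) := by
  have hcl : |z.im| ≤ z.re ∧ |z.im| ≤ 2 - z.re := by
    have hsub : closure Dsq ⊆ {w : ℂ | |w.im| ≤ w.re ∧ |w.im| ≤ 2 - w.re} :=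
      closure_minimal (fun w hw => ⟨hw.1.le, hw.2.le⟩)
        ((isClosed_le (continuous_abs.comp Complex.continuous_im) Complex.continuous_re).inter
          (isClosed_le (continuous_abs.comp Complex.continuous_im)
            (continuous_const.sub Complex.continuous_re)))
    exact hsub hz
  obtain ⟨hy1, hy2⟩ := hcl
  set x := z.re with hxdef
  set y := z.im with hydef
  have hx0 : 0 ≤ x := le_trans (abs_nonneg y) hy1
  have hx2 : x ≤ 2 := by have := le_trans (abs_nonneg y) hy2; linarith
  have hysq : y^2 ≤ 1 := by
    nlinarith [_root_.sq_abs y, abs_nonneg y, sq_nonneg (x-1)]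
  set a : ℝ := (x + 2*(n:ℝ))^2 - y^2 with hadef
  have hn1 : (1:ℝ) ≤ (n:ℝ)^2 := by
    have h : 1 ≤ |n| := Int.one_le_abs hn'
    have h' : (1:ℝ) ≤ |(n:ℝ)| := by
      rw [← Int.cast_abs]; exact_mod_cast h
    nlinarith [_root_.sq_abs (n:ℝ)]
  have han : (n:ℝ)^2 ≤ a := by
    rcases lt_or_ge n 0 with h | h
    · have h2 : n ≤ -2 := by omega
      have h2' : (n:ℝ) ≤ -2 := by exact_mod_cast h2
      have hy2' : y^2 ≤ (2-x)^2 := by nlinarith [_root_.sq_abs y, abs_nonneg y]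
      nlinarith [mul_nonneg (by linarith : (0:ℝ) ≤ -(n:ℝ)-1) (by linarith : (0:ℝ) ≤ 2-x),
        mul_nonneg (by linarith : (0:ℝ) ≤ -3*(n:ℝ)-2) (by linarith : (0:ℝ) ≤ -(n:ℝ)-2)]
    · have h1 : 1 ≤ n := by omega
      have h1' : (1:ℝ) ≤ (n:ℝ) := by exact_mod_cast h1
      have hy1' : y^2 ≤ x^2 := by nlinarith [_root_.sq_abs y, abs_nonneg y]
      nlinarith [mul_nonneg hx0 (by linarith : (0:ℝ) ≤ (n:ℝ))]
  have ha1 : (1:ℝ) ≤ a := le_trans hn1 han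
  have ha0 : 0 < a := by linarith
  set c := a/2 with hcdef
  have hc : 0 < c := by positivity
  set w : ℂ := z + 2*(n:ℂ) with hwdef
  have hwre : w.re = x + 2*(n:ℝ) := by simp [hwdef, hxdef]
  have hwim : w.im = y := by simp [hwdef, hydef]
  have hw2re : (w^2).re = a := by
    rw [sq, Complex.mul_re, hwre, hwim, hadef]; ring
  have hnw : ‖w‖^2 = (x+2*(n:ℝ))^2 + y^2 := by
    rw [Complex.sq_norm, Complex.normSq_apply, hwre, hwim]; ring
  have hwa : ‖w‖^2 ≤ 3*a := by rw [hnw]; nlinarith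
  clear_value w c a y x
  have hpt : ∀ s : ℝ, 0 < s →
      ‖dxK w s‖^2 = (‖w‖^2/(16*Real.pi)) * (Real.exp (-c/s)/s^3) := by
    intro s hs
    have hsp : (0:ℝ) < s ^ ((3:ℝ)/2) := Real.rpow_pos_of_pos hs _
    have hpi : (0:ℝ) < Real.sqrt Real.pi := Real.sqrt_pos.mpr Real.pi_pos
    have h32 : (s ^ ((3:ℝ)/2))^2 = s^3 := by
      rw [← Real.rpow_natCast (s ^ ((3:ℝ)/2)) 2, ← Real.rpow_mul hs.le,
        show (3:ℝ)/2 * ((2:ℕ):ℝ) = ((3:ℕ):ℝ) by norm_num, Real.rpow_natCast]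
    have hden : ‖(4 * (Real.sqrt Real.pi : ℂ) * ((s ^ ((3:ℝ)/2) : ℝ) : ℂ))‖
        = 4 * Real.sqrt Real.pi * s ^ ((3:ℝ)/2) := by
      simp only [norm_mul, Complex.norm_ofNat, Complex.norm_real, Real.norm_eq_abs]
      rw [_root_.abs_of_nonneg hpi.le, _root_.abs_of_nonneg hsp.le]
    have hre : (-w^2 / (4*(s:ℂ))).re = -a/(4*s) := by
      rw [Complex.div_re]
      simp [Complex.normSq_apply, Complex.neg_re, hw2re]
      field_simp
    rw [dxK, norm_mul, norm_div, norm_neg,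
      Complex.norm_exp, hre, hden]
    rw [mul_pow, div_pow, mul_pow, mul_pow, h32,
      Real.sq_sqrt Real.pi_pos.le]
    rw [← Real.exp_nat_mul]
    rw [show ((2:ℕ):ℝ) * (-a/(4*s)) = -c/s by rw [hcdef]; push_cast; ring]
    field_simp [hs.ne', Real.pi_ne_zero]
    norm_num
  have hint_eq : Set.EqOn (fun τ => ‖dxK w (t-τ)‖^2)
      (fun τ => (‖w‖^2/(16*Real.pi)) * (Real.exp (-c/(t-τ))/(t-τ)^3)) (Set.Ioo 0 t) :=
    fun τ hτ => hpt (t-τ) (by have := hτ.2; simp only [Set.mem_Ioo] at *; linarith)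
  rw [MeasureTheory.setIntegral_congr_fun measurableSet_Ioo hint_eq,
    MeasureTheory.integral_const_mul, aux_integral_g c t hc ht]
  -- final arithmetic
  have hexp : Real.exp (-c/t) ≤ Real.exp (-(n:ℝ)^2/(2*t)) := by
    apply Real.exp_le_exp.2
    rw [hcdef, div_le_div_iff₀ ht (by positivity)]
    nlinarith
  have harith : (3*a)/(16*Real.pi) * (1/(c*t)+1/c^2) ≤ (4/Real.pi)*(1+1/t) := by
    have hpi := Real.pi_pos
    have heq : (3*a)/(16*Real.pi)*(1/(c*t)+1/c^2) = 3/(8*Real.pi*t) + 3/(4*Real.pi*a) := by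
      rw [hcdef]; field_simp; ring
    have hr : (4/Real.pi)*(1+1/t) = 4/Real.pi + 4/(Real.pi*t) := by
      field_simp
    have h5 : 3/(8*Real.pi*t) ≤ 4/(Real.pi*t) := by
      rw [div_le_div_iff₀ (by positivity) (by positivity)]; nlinarith [mul_pos hpi ht]
    have h6 : 3/(4*Real.pi*a) ≤ 4/Real.pi := by
      rw [div_le_div_iff₀ (by positivity) (by positivity)]
      nlinarith [mul_pos hpi ha0, mul_le_mul_of_nonneg_left ha1 hpi.le]
    rw [heq, hr]; linarith
  have hpos1 : (0:ℝ) ≤ 1/(c*t) + 1/c^2 := by positivity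
  calc ‖w‖^2/(16*Real.pi) * (Real.exp (-c/t) * (1/(c*t)+1/c^2))
      = (‖w‖^2/(16*Real.pi) * (1/(c*t)+1/c^2)) * Real.exp (-c/t) := by ring
    _ ≤ ((3*a)/(16*Real.pi) * (1/(c*t)+1/c^2)) * Real.exp (-(n:ℝ)^2/(2*t)) := by
        apply mul_le_mul
        · apply mul_le_mul_of_nonneg_right _ hpos1
          gcongr
        · exact hexp
        · exact Real.exp_nonneg _
        · positivity
    _ ≤ ((4/Real.pi)*(1+1/t)) * Real.exp (-(n:ℝ)^2/(2*t)) :=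
        mul_le_mul_of_nonneg_right harith (Real.exp_nonneg _)
    _ = (4/Real.pi)*(1+1/t)*Real.exp (-(n:ℝ)^2/(2*t)) := by ring
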